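/- Duality for linear programs over simple coverings: Let N be a positive integer and b_{k,l} real numbers for 1 ≤ k ≤ l ≤ N. The system of inequalities Σ_{s=k}^{l} y_s ≤ b_{k,l} (for all 1 ≤ k ≤ l ≤ N) subject to Σ_{s=1}^{N} y_s = 0 has a real solution (y_1,...,y_N) if and only if Σ_{i=1}^{m-1} b_{k_i, k_{i+1}-1} ≥ 0 for every increasing sequence of integers 1 = k_1 < k_2 < ... < k_m = N+1. -/

import Mathlib

open Finset

noncomputable def gF (b : ℕ → ℕ → ℝ) : ℕ → ℝ
  | 0 => 0
  | l + 1 =>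
    ((Finset.Icc 1 (l + 1)).attach.inf' (by simp)
      (fun k => gF b (k.1 - 1) + b k.1 (l + 1)))
decreasing_by
  · have := Finset.mem_Icc.1 k.2
    omega

lemma gF_zero (b : ℕ → ℕ → ℝ) : gF b 0 = 0 := by rw [gF]

lemma gF_le (b : ℕ → ℕ → ℝ) (l k : ℕ) (hk : 1 ≤ k) (hkl : k ≤ l) :
    gF b l ≤ gF b (k - 1) + b k l := by
  obtain ⟨t, rfl⟩ : ∃ t, l = t + 1 := ⟨l - 1, by omega⟩
  rw [gF]
  exact Finset.inf'_le _ (Finset.mem_attach _ ⟨k, Finset.mem_Icc.2 ⟨hk, hkl⟩⟩)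

lemma gF_exists_min (b : ℕ → ℕ → ℝ) (l : ℕ) (hl : 1 ≤ l) :
    ∃ k, 1 ≤ k ∧ k ≤ l ∧ gF b l = gF b (k - 1) + b k l := by
  obtain ⟨t, rfl⟩ : ∃ t, l = t + 1 := ⟨l - 1, by omega⟩
  obtain ⟨k, -, hk⟩ := Finset.exists_mem_eq_inf' (s := (Finset.Icc 1 (t + 1)).attach)
    (by simp) (fun k => gF b (k.1 - 1) + b k.1 (t + 1))
  have hm := Finset.mem_Icc.1 k.2
  exact ⟨k.1, hm.1, hm.2, by rw [gF]; exact hk⟩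

lemma chain_extend (b : ℕ → ℕ → ℝ) (m : ℕ) (k : ℕ → ℕ) (hm : 1 ≤ m)
    (hmono : StrictMonoOn k (Set.Icc 1 m)) (h1 : k 1 = 1) (t u : ℕ)
    (hkm : k m = t + 1) (htu : t + 1 ≤ u) :
    ∃ k' : ℕ → ℕ, StrictMonoOn k' (Set.Icc 1 (m + 1)) ∧ k' 1 = 1 ∧ k' (m + 1) = u + 1 ∧
      ∑ i ∈ Ico 1 (m + 1), b (k' i) (k' (i + 1) - 1)
        = (∑ i ∈ Ico 1 m, b (k i) (k (i + 1) - 1)) + b (t + 1) u := by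
  refine ⟨fun i => if i ≤ m then k i else u + 1, ?_, ?_, ?_, ?_⟩
  · intro x hx y hy hxy
    simp only [Set.mem_Icc] at hx hy
    by_cases hym : y ≤ m
    · simp only [if_pos (le_trans hxy.le hym), if_pos hym]
      exact hmono ⟨hx.1, le_trans hxy.le hym⟩ ⟨hy.1, hym⟩ hxy
    · have hxm : x ≤ m := by omega
      simp only [if_pos hxm, if_neg hym]
      have : k x ≤ k m := hmono.monotoneOn ⟨hx.1, hxm⟩ ⟨hm, le_refl m⟩ hxm
      omega
  · simp [hm, h1]
  · simp
  · rw [Finset.sum_Ico_succ_top (by omega)]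
    congr 1
    · apply Finset.sum_congr rfl
      intro i hi
      have hi' := Finset.mem_Ico.1 hi
      simp only [if_pos (by omega : i ≤ m), if_pos (by omega : i + 1 ≤ m)]
    · simp only [if_pos (le_refl m), if_neg (by omega : ¬ m + 1 ≤ m), hkm]
      norm_num

lemma gF_achieved (b : ℕ → ℕ → ℝ) : ∀ l : ℕ, ∃ (m : ℕ) (k : ℕ → ℕ),
    1 ≤ m ∧ StrictMonoOn k (Set.Icc 1 m) ∧ k 1 = 1 ∧ k m = l + 1 ∧
    ∑ i ∈ Ico 1 m, b (k i) (k (i + 1) - 1) = gF b l := by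
  intro l
  induction l using Nat.strong_induction_on with
  | _ l ih =>
    rcases Nat.eq_zero_or_pos l with rfl | hl
    · refine ⟨1, fun _ => 1, le_refl 1, ?_, rfl, rfl, by simp [gF_zero]⟩
      intro x hx y hy hxy
      simp only [Set.mem_Icc] at hx hy
      omega
    · obtain ⟨c, hc1, hcl, hgc⟩ := gF_exists_min b l hl
      obtain ⟨m, k, hm, hmono, h1, hkm, hsum⟩ := ih (c - 1) (by omega)
      have hc : c - 1 + 1 = c := by omega
      obtain ⟨t, rfl⟩ : ∃ t, l = t + 1 := ⟨l - 1, by omega⟩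
      obtain ⟨k', hmono', h1', hkm', hsum'⟩ :=
        chain_extend b m k hm hmono h1 (c - 1) (t + 1) hkm (by omega)
      exact ⟨m + 1, k', by omega, hmono', h1', hkm', by rw [hsum', hsum, hgc, hc]⟩

lemma telescope (g : ℕ → ℝ) (k l : ℕ) (hk : 1 ≤ k) (hkl : k ≤ l) :
    ∑ s ∈ Icc k l, (g s - g (s - 1)) = g l - g (k - 1) := by
  induction l, hkl using Nat.le_induction with
  | base => simp [show k - 1 + 1 = k from by omega]
  | succ n hn ih =>
    rw [Finset.sum_Icc_succ_top (by omega), ih]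
    simp

/-- Duality for linear programs over simple coverings: the system
`Σ_{s=k}^l y_s ≤ b_{k,l}` (for `1 ≤ k ≤ l ≤ N`) with `Σ_{s=1}^N y_s = 0` is solvable
iff `Σ_{i=1}^{m-1} b_{k_i, k_{i+1}-1} ≥ 0` for every increasing sequence
`1 = k_1 < k_2 < ... < k_m = N+1`. -/
theorem lp_duality_simple_coverings (N : ℕ) (hN : 1 ≤ N) (b : ℕ → ℕ → ℝ) :
    (∃ y : ℕ → ℝ,
      (∀ k l : ℕ, 1 ≤ k → k ≤ l → l ≤ N → ∑ s ∈ Finset.Icc k l, y s ≤ b k l) ∧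
      ∑ s ∈ Finset.Icc 1 N, y s = 0) ↔
    ∀ (m : ℕ) (k : ℕ → ℕ), 2 ≤ m → StrictMonoOn k (Set.Icc 1 m) →
      k 1 = 1 → k m = N + 1 →
      0 ≤ ∑ i ∈ Finset.Ico 1 m, b (k i) (k (i + 1) - 1) := by
  constructor
  · rintro ⟨y, hy, hy0⟩ m k hm hmono h1 hkm
    have hk1 : ∀ j, 1 ≤ j → j ≤ m → 1 ≤ k j := by
      intro j hj hjm
      have := hmono.monotoneOn ⟨le_refl 1, by omega⟩ ⟨hj, hjm⟩ hj
      omega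
    have hkmono : ∀ i j, 1 ≤ i → i ≤ j → j ≤ m → k i ≤ k j := by
      intro i j hi hij hjm
      exact hmono.monotoneOn ⟨hi, by omega⟩ ⟨by omega, hjm⟩ hij
    have key : ∀ j, 1 ≤ j → j ≤ m →
        ∑ i ∈ Ico 1 j, (∑ s ∈ Ioc (k i - 1) (k (i + 1) - 1), y s)
          = ∑ s ∈ Ioc 0 (k j - 1), y s := by
      intro j hj
      induction j, hj using Nat.le_induction with
      | base => intro _; simp [h1]
      | succ n hn ih =>
        intro hnm
        rw [Finset.sum_Ico_succ_top (by omega), ih (by omega),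
          Finset.sum_Ioc_consecutive]
        · omega
        · have h1n : 1 ≤ k n := hk1 n (by omega) (by omega)
          have := hmono ⟨hn, by omega⟩ ⟨by omega, hnm⟩ (by omega : n < n + 1)
          omega
    have hblocks : ∑ i ∈ Ico 1 m, (∑ s ∈ Ioc (k i - 1) (k (i + 1) - 1), y s) = 0 := by
      rw [key m (by omega) (le_refl m), hkm]
      simpa [← Finset.Icc_add_one_left_eq_Ioc] using hy0
    calc (0 : ℝ) = ∑ i ∈ Ico 1 m, (∑ s ∈ Ioc (k i - 1) (k (i + 1) - 1), y s) :=
          hblocks.symm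
      _ ≤ ∑ i ∈ Ico 1 m, b (k i) (k (i + 1) - 1) := by
          apply Finset.sum_le_sum
          intro i hi
          have hi' := Finset.mem_Ico.1 hi
          have hki : 1 ≤ k i := hk1 i hi'.1 (by omega)
          have hlt : k i < k (i + 1) :=
            hmono ⟨hi'.1, by omega⟩ ⟨by omega, by omega⟩ (by omega)
          have hle : k (i + 1) ≤ N + 1 := by
            have := hkmono (i + 1) m (by omega) (by omega) (le_refl m)
            omega
          have heq : Ioc (k i - 1) (k (i + 1) - 1) = Icc (k i) (k (i + 1) - 1) := by
            rw [← Finset.Icc_add_one_left_eq_Ioc]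
            congr 1
            omega
          rw [heq]
          exact hy (k i) (k (i + 1) - 1) hki (by omega) (by omega)
  · intro H
    have fact : ∀ c, 1 ≤ c → c ≤ N → 0 ≤ gF b (c - 1) + b c N := by
      intro c hc1 hcN
      obtain ⟨m, k, hm, hmono, h1, hkm, hsum⟩ := gF_achieved b (c - 1)
      obtain ⟨N', rfl⟩ : ∃ t, N = t + 1 := ⟨N - 1, by omega⟩
      obtain ⟨k', hmono', h1', hkm', hsum'⟩ :=
        chain_extend b m k hm hmono h1 (c - 1) (N' + 1) hkm (by omega)
      have := H (m + 1) k' (by omega) hmono' h1' hkm'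
      rw [hsum', hsum, show c - 1 + 1 = c from by omega] at this
      exact this
    set y : ℕ → ℝ := fun s => if s = N then -(gF b (N - 1)) else gF b s - gF b (s - 1)
      with hy_def
    have hsumN : ∀ c, 1 ≤ c → c ≤ N → ∑ s ∈ Icc c N, y s = -(gF b (c - 1)) := by
      intro c hc1 hcN
      rcases eq_or_lt_of_le hcN with rfl | hlt
      · simp [hy_def]
      · have hN1 : N - 1 + 1 = N := by omega
        rw [← hN1, Finset.sum_Icc_succ_top (by omega), hN1]
        have hfirst : ∑ s ∈ Icc c (N - 1), y s = gF b (N - 1) - gF b (c - 1) := by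
          rw [show (∑ s ∈ Icc c (N - 1), y s)
              = ∑ s ∈ Icc c (N - 1), (gF b s - gF b (s - 1)) from ?_,
            telescope (gF b) c (N - 1) hc1 (by omega)]
          apply Finset.sum_congr rfl
          intro s hs
          have hs' := Finset.mem_Icc.1 hs
          simp only [hy_def, if_neg (by omega : ¬ s = N)]
        rw [hfirst]
        simp only [hy_def, if_pos rfl]
        ring
    refine ⟨y, ?_, ?_⟩
    · intro k l hk hkl hlN
      rcases eq_or_lt_of_le hlN with rfl | hlt
      · rw [hsumN k hk hkl]
        have := fact k hk hkl
        linarith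
      · have : ∑ s ∈ Icc k l, y s = gF b l - gF b (k - 1) := by
          rw [show (∑ s ∈ Icc k l, y s)
              = ∑ s ∈ Icc k l, (gF b s - gF b (s - 1)) from ?_,
            telescope (gF b) k l hk hkl]
          apply Finset.sum_congr rfl
          intro s hs
          have hs' := Finset.mem_Icc.1 hs
          simp only [hy_def, if_neg (by omega : ¬ s = N)]
        rw [this]
        have := gF_le b l k hk hkl
        linarith
    · rw [hsumN 1 (le_refl 1) hN]
      simp [gF_zero]
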